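/- Let S be a partial semigroup and E ⊆ S a right ideal such that S is E-directed. Then {U ∈ γS : E ∈ U} is a nonempty compact right ideal in γS. -/
import Mathlib


/-- For a partial semigroup `S` and a right ideal `E` such that
`S` is `E`-directed, the set `{U ∈ γS : E ∈ U}` is a nonempty compact right
ideal in the semigroup `γS` of cofinite ultrafilters. -/
theorem stmt_14 (S : Type*) (op : S → S → Option S)
    (hassoc : ∀ r s t : S,
      ((op r s).bind fun x => op x t) = ((op s t).bind fun y => op r y))
    (E : Set S) (hne : E.Nonempty)
    (hideal : ∀ x y z : S, op x y = some z → x ∈ E → z ∈ E)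
    (hdir : ∀ F : Finset S, ∃ x ∈ E, ∀ s ∈ F, (op s x).isSome)
    (γS : Set (Ultrafilter S))
    (hγ : γS = {U : Ultrafilter S | ∀ x : S, {y | (op x y).isSome} ∈ U})
    (mul : Ultrafilter S → Ultrafilter S → Ultrafilter S)
    (hmul : ∀ U ∈ γS, ∀ V ∈ γS, ∀ A : Set S,
      A ∈ mul U V ↔ {x | {y | ∃ z ∈ A, op x y = some z} ∈ V} ∈ U) :
    ({U ∈ γS | E ∈ U}).Nonempty ∧
    IsCompact {U ∈ γS | E ∈ U} ∧
    (∀ U ∈ {W ∈ γS | E ∈ W}, ∀ V ∈ γS, mul U V ∈ {W ∈ γS | E ∈ W}) := by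
  subst hγ
  set D : S → Set S := fun x => {y | (op x y).isSome} with hD
  have hfilt : ∀ F : Finset S, (E ∩ ⋂ x ∈ F, D x).Nonempty := by
    intro F
    obtain ⟨x, hxE, hx⟩ := hdir F
    exact ⟨x, hxE, by
      simp only [Set.mem_iInter]
      intro s hs
      exact hx s hs⟩
  classical
  have _inst : Nonempty S := ⟨hne.choose⟩
  have hdirected : Directed (· ≥ ·)
      fun F : Finset S => (Filter.principal (E ∩ ⋂ x ∈ F, D x)) := by
    intro F G
    refine ⟨F ∪ G, ?_, ?_⟩
    · refine Filter.principal_mono.mpr (Set.inter_subset_inter_right _ ?_)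
      intro y hy
      simp only [Set.mem_iInter] at hy ⊢
      intro i hi
      exact hy i (Finset.mem_union_left _ hi)
    · refine Filter.principal_mono.mpr (Set.inter_subset_inter_right _ ?_)
      intro y hy
      simp only [Set.mem_iInter] at hy ⊢
      intro i hi
      exact hy i (Finset.mem_union_right _ hi)
  have hne' : (⨅ F : Finset S, Filter.principal (E ∩ ⋂ x ∈ F, D x)).NeBot :=
    Filter.iInf_neBot_of_directed hdirected
      (fun F => Filter.principal_neBot_iff.mpr (hfilt F))
  obtain ⟨U, hU⟩ := Ultrafilter.exists_le (⨅ F : Finset S, Filter.principal (E ∩ ⋂ x ∈ F, D x))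
  have hmemU : ∀ F : Finset S, (E ∩ ⋂ x ∈ F, D x) ∈ U := by
    intro F
    exact hU (Filter.mem_iInf_of_mem F (Filter.mem_principal_self _))
  have hUE : E ∈ U := (U.toFilter).mem_of_superset (hmemU ∅) Set.inter_subset_left
  have hUγ : ∀ x : S, D x ∈ U := by
    intro x
    refine (U.toFilter).mem_of_superset (hmemU {x}) ?_
    intro y hy
    have := hy.2
    simp only [Set.mem_iInter, Finset.mem_singleton] at this
    exact this x rfl
  refine ⟨⟨U, hUγ, hUE⟩, ?_, ?_⟩
  · have heq : {W : Ultrafilter S | W ∈ {U : Ultrafilter S | ∀ x : S, D x ∈ U} ∧ E ∈ W} =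
        (⋂ x, {W : Ultrafilter S | D x ∈ W}) ∩ {W : Ultrafilter S | E ∈ W} := by
      ext W
      simp [Set.mem_iInter]
    show IsCompact {W : Ultrafilter S | W ∈ {U : Ultrafilter S | ∀ x : S, D x ∈ U} ∧ E ∈ W}
    rw [heq]
    exact (IsClosed.inter (isClosed_iInter fun x => ultrafilter_isClosed_basic _)
      (ultrafilter_isClosed_basic _)).isCompact
  · rintro W ⟨hWγ, hWE⟩ V hV
    constructor
    · intro a
      refine (hmul W hWγ V hV (D a)).mpr ?_
      refine (W.toFilter).mem_of_superset (hWγ a) ?_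
      intro x hx
      obtain ⟨w, hw⟩ := Option.isSome_iff_exists.mp hx
      refine (V.toFilter).mem_of_superset (hV w) ?_
      intro y hy
      obtain ⟨u, hu⟩ := Option.isSome_iff_exists.mp hy
      have hass := hassoc a x y
      rw [hw] at hass
      simp only [Option.bind_some] at hass
      rw [hu] at hass
      cases hxy : op x y with
      | none => rw [hxy] at hass; simp at hass
      | some z =>
        rw [hxy] at hass
        simp only [Option.bind_some] at hass
        exact ⟨z, by simp [D, ← hass], hxy⟩
    · refine (hmul W hWγ V hV E).mpr ?_
      refine (W.toFilter).mem_of_superset hWE ?_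
      intro x hx
      refine (V.toFilter).mem_of_superset (hV x) ?_
      intro y hy
      obtain ⟨z, hz⟩ := Option.isSome_iff_exists.mp hy
      exact ⟨z, hideal x y z hz hx, hz⟩
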